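/- arXiv:2411.09354 — 3 statements merged into one kernel-verified Lean document; each statement's English description precedes it below -/
import Mathlib

section
/- Let $u_0 > 0$, $p \geq 0$ with $p \neq 1$, and let $u, v, w : [0,T] \to \mathbb{R}$ be nonnegative continuous functions. If $u(t) \leq u_0 + \int_0^t \big(v(s)u(s) + w(s)u(s)^p\big)\,ds$ for all $t \in [0,T]$, and the quantity $u_0^{1-p} + (1-p)\int_0^t w(s) e^{(p-1)\int_0^s v(r)\,dr}\,ds$ is strictly positive for all $t \in [0,T]$, then $u(t) \leq e^{\int_0^t v(s)\,ds}\Big[u_0^{1-p} + (1-p)\int_0^t w(s)e^{(p-1)\int_0^s v(r)\,dr}\,ds\Big]^{\frac{1}{1-p}}$ for all $t \in [0,T]$. -/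
open Real MeasureTheory intervalIntegral

private lemma prim_continuousOn {g : ℝ → ℝ} {T : ℝ} (hT : 0 ≤ T)
    (hg : ContinuousOn g (Set.Icc 0 T)) :
    ContinuousOn (fun x => ∫ s in (0:ℝ)..x, g s) (Set.Icc 0 T) := by
  have h := intervalIntegral.continuousOn_primitive_interval
    (a := 0) (b := T) (μ := volume) (f := g)
    (by rw [Set.uIcc_of_le hT]; exact hg.integrableOn_Icc)
  rwa [Set.uIcc_of_le hT] at h

private lemma prim_hasDerivAt {g : ℝ → ℝ} {T x : ℝ} (hg : ContinuousOn g (Set.Icc 0 T))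
    (hx : x ∈ Set.Ioo 0 T) :
    HasDerivAt (fun y => ∫ s in (0:ℝ)..y, g s) (g x) x := by
  apply intervalIntegral.integral_hasDerivAt_right
  · exact ((hg.mono (Set.Icc_subset_Icc le_rfl hx.2.le)).intervalIntegrable_of_Icc hx.1.le)
  · exact (hg.mono Set.Ioo_subset_Icc_self).stronglyMeasurableAtFilter isOpen_Ioo x hx
  · exact hg.continuousAt (Icc_mem_nhds hx.1 hx.2)

/-- Willet's nonlinear Grönwall inequality. -/
theorem nonlinear_gronwall
    (T : ℝ) (hT : 0 ≤ T)
    (u v w : ℝ → ℝ) (u₀ p : ℝ)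
    (hu₀ : 0 < u₀) (hp : 0 ≤ p) (hp1 : p ≠ 1)
    (hu : ContinuousOn u (Set.Icc 0 T))
    (hv : ContinuousOn v (Set.Icc 0 T))
    (hw : ContinuousOn w (Set.Icc 0 T))
    (hu_nonneg : ∀ t ∈ Set.Icc (0:ℝ) T, 0 ≤ u t)
    (hv_nonneg : ∀ t ∈ Set.Icc (0:ℝ) T, 0 ≤ v t)
    (hw_nonneg : ∀ t ∈ Set.Icc (0:ℝ) T, 0 ≤ w t)
    (hineq : ∀ t ∈ Set.Icc (0:ℝ) T,
      u t ≤ u₀ + ∫ s in (0:ℝ)..t, (v s * u s + w s * u s ^ p))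
    (hpos : ∀ t ∈ Set.Icc (0:ℝ) T,
      0 < u₀ ^ (1 - p) + (1 - p) *
        ∫ s in (0:ℝ)..t, w s * Real.exp ((p - 1) * ∫ r in (0:ℝ)..s, v r)) :
    ∀ t ∈ Set.Icc (0:ℝ) T,
      u t ≤ Real.exp (∫ s in (0:ℝ)..t, v s) *
        (u₀ ^ (1 - p) + (1 - p) *
          ∫ s in (0:ℝ)..t, w s * Real.exp ((p - 1) * ∫ r in (0:ℝ)..s, v r))
          ^ (1 / (1 - p)) := by
  -- abbreviations
  set f : ℝ → ℝ := fun s => v s * u s + w s * u s ^ p with hfdef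
  set U : ℝ → ℝ := fun x => u₀ + ∫ s in (0:ℝ)..x, f s with hUdef
  set V : ℝ → ℝ := fun x => ∫ s in (0:ℝ)..x, v s with hVdef
  set g : ℝ → ℝ := fun s => w s * Real.exp ((p - 1) * V s) with hgdef
  set G : ℝ → ℝ := fun x => u₀ ^ (1 - p) + (1 - p) * ∫ s in (0:ℝ)..x, g s with hGdef
  set Z : ℝ → ℝ := fun x => U x * Real.exp (-(V x)) with hZdef
  set φ : ℝ → ℝ := fun x => Z x ^ (1 - p) with hφdef
  have h1p : (1:ℝ) - p ≠ 0 := sub_ne_zero.mpr (Ne.symm hp1)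
  -- continuity
  have hupc : ContinuousOn (fun s => u s ^ p) (Set.Icc 0 T) :=
    hu.rpow_const (fun x _ => Or.inr hp)
  have hfc : ContinuousOn f (Set.Icc 0 T) := (hv.mul hu).add (hw.mul hupc)
  have hVc : ContinuousOn V (Set.Icc 0 T) := prim_continuousOn hT hv
  have hgc : ContinuousOn g (Set.Icc 0 T) :=
    hw.mul (Real.continuous_exp.comp_continuousOn (continuousOn_const.mul hVc))
  have hUc : ContinuousOn U (Set.Icc 0 T) := continuousOn_const.add (prim_continuousOn hT hfc)
  have hGc : ContinuousOn G (Set.Icc 0 T) :=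
    continuousOn_const.add (continuousOn_const.mul (prim_continuousOn hT hgc))
  have hZc : ContinuousOn Z (Set.Icc 0 T) :=
    hUc.mul (Real.continuous_exp.comp_continuousOn hVc.neg)
  -- positivity / basic bounds
  have hfnn : ∀ x ∈ Set.Icc (0:ℝ) T, 0 ≤ f x := by
    intro x hx
    have h1 : 0 ≤ v x * u x := mul_nonneg (hv_nonneg x hx) (hu_nonneg x hx)
    have h2 : 0 ≤ w x * u x ^ p :=
      mul_nonneg (hw_nonneg x hx) (Real.rpow_nonneg (hu_nonneg x hx) p)
    simpa [hfdef] using add_nonneg h1 h2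
  have hUpos : ∀ x ∈ Set.Icc (0:ℝ) T, 0 < U x := by
    intro x hx
    have : 0 ≤ ∫ s in (0:ℝ)..x, f s := by
      apply intervalIntegral.integral_nonneg hx.1
      intro s hs
      exact hfnn s ⟨hs.1, hs.2.trans hx.2⟩
    simp only [hUdef]
    linarith
  have hZpos : ∀ x ∈ Set.Icc (0:ℝ) T, 0 < Z x := fun x hx =>
    mul_pos (hUpos x hx) (Real.exp_pos _)
  have hφc : ContinuousOn φ (Set.Icc 0 T) :=
    hZc.rpow_const (fun x hx => Or.inl (hZpos x hx).ne')
  have huU : ∀ x ∈ Set.Icc (0:ℝ) T, u x ≤ U x := hineq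
  -- derivatives at interior points
  have hU' : ∀ x ∈ Set.Ioo (0:ℝ) T, HasDerivAt U (f x) x := fun x hx =>
    (prim_hasDerivAt hfc hx).const_add u₀
  have hV' : ∀ x ∈ Set.Ioo (0:ℝ) T, HasDerivAt V (v x) x := fun x hx =>
    prim_hasDerivAt hv hx
  have hG' : ∀ x ∈ Set.Ioo (0:ℝ) T, HasDerivAt G ((1 - p) * g x) x := fun x hx =>
    ((prim_hasDerivAt hgc hx).const_mul (1 - p)).const_add _
  have hZ' : ∀ x ∈ Set.Ioo (0:ℝ) T,
      HasDerivAt Z ((f x - v x * U x) * Real.exp (-(V x))) x := by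
    intro x hx
    have hE : HasDerivAt (fun y => Real.exp (-(V y))) (Real.exp (-(V x)) * (-(v x))) x :=
      (hV' x hx).neg.exp
    have := (hU' x hx).mul hE
    exact this.congr_deriv (by ring)
  have hφ' : ∀ x ∈ Set.Ioo (0:ℝ) T,
      HasDerivAt φ ((1 - p) * (Z x ^ (-p) * ((f x - v x * U x) * Real.exp (-(V x))))) x := by
    intro x hx
    have hx' : x ∈ Set.Icc (0:ℝ) T := Set.Ioo_subset_Icc_self hx
    have := (hZ' x hx).rpow_const (p := 1 - p) (Or.inl (hZpos x hx').ne')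
    convert this using 1
    have : (1:ℝ) - p - 1 = -p := by ring
    rw [this]
    ring
  -- key derivative bound : Z^(-p) * Z' ≤ g
  have hkey : ∀ x ∈ Set.Ioo (0:ℝ) T,
      Z x ^ (-p) * ((f x - v x * U x) * Real.exp (-(V x))) ≤ g x := by
    intro x hx
    have hx' : x ∈ Set.Icc (0:ℝ) T := Set.Ioo_subset_Icc_self hx
    have hUp : 0 < U x := hUpos x hx'
    have hfb : f x - v x * U x ≤ w x * U x ^ p := by
      have h1 : v x * u x ≤ v x * U x :=
        mul_le_mul_of_nonneg_left (huU x hx') (hv_nonneg x hx')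
      have h2 : w x * u x ^ p ≤ w x * U x ^ p :=
        mul_le_mul_of_nonneg_left
          (Real.rpow_le_rpow (hu_nonneg x hx') (huU x hx') hp) (hw_nonneg x hx')
      simp only [hfdef]
      linarith
    have hZnn : 0 ≤ Z x ^ (-p) := Real.rpow_nonneg (hZpos x hx').le _
    have step1 : Z x ^ (-p) * ((f x - v x * U x) * Real.exp (-(V x))) ≤
        Z x ^ (-p) * (w x * U x ^ p * Real.exp (-(V x))) := by
      apply mul_le_mul_of_nonneg_left _ hZnn
      exact mul_le_mul_of_nonneg_right hfb (Real.exp_pos _).le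
    refine step1.trans (le_of_eq ?_)
    -- Z^(-p) * (w U^p e^{-V}) = g
    have e1 : Z x ^ (-p) = U x ^ (-p) * Real.exp (p * V x) := by
      rw [hZdef]
      rw [Real.mul_rpow hUp.le (Real.exp_pos _).le, ← Real.exp_mul]
      congr 2
      ring
    have e2 : U x ^ (-p) * U x ^ p = 1 := by
      rw [← Real.rpow_add hUp]
      simp
    have e3 : Real.exp (p * V x) * Real.exp (-(V x)) = Real.exp ((p - 1) * V x) := by
      rw [← Real.exp_add]
      congr 1
      ring
    calc Z x ^ (-p) * (w x * U x ^ p * Real.exp (-(V x)))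
        = (U x ^ (-p) * U x ^ p) * (Real.exp (p * V x) * Real.exp (-(V x))) * w x := by
          rw [e1]; ring
      _ = w x * Real.exp ((p - 1) * V x) := by rw [e2, e3]; ring
  -- value at zero
  have hφ0 : φ 0 = u₀ ^ (1 - p) := by
    simp [hφdef, hZdef, hUdef, hVdef, intervalIntegral.integral_same]
  have hG0 : G 0 = u₀ ^ (1 - p) := by
    simp [hGdef, intervalIntegral.integral_same]
  intro t ht
  -- reduce goal
  have hVt : (∫ s in (0:ℝ)..t, v s) = V t := rfl
  have hGt : (u₀ ^ (1 - p) + (1 - p) *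
      ∫ s in (0:ℝ)..t, w s * Real.exp ((p - 1) * ∫ r in (0:ℝ)..s, v r)) = G t := rfl
  rw [hVt, hGt]
  have hexp : Z t * Real.exp (V t) = U t := by
    rw [hZdef]
    rw [mul_assoc, ← Real.exp_add]
    simp
  have hZt : 0 < Z t := hZpos t ht
  rcases lt_or_gt_of_ne (sub_ne_zero.mpr (Ne.symm hp1)) with hneg | hposq
  · -- p > 1 : show G t ≤ φ t, then invert with negative exponent
    have hmono : AntitoneOn (fun x => G x - φ x) (Set.Icc 0 T) := by
      apply antitoneOn_of_deriv_nonpos (convex_Icc 0 T) (hGc.sub hφc)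
      · intro x hx
        rw [interior_Icc] at hx
        exact ((hG' x hx).sub (hφ' x hx)).differentiableAt.differentiableWithinAt
      · intro x hx
        rw [interior_Icc] at hx
        rw [((hG' x hx).sub (hφ' x hx)).deriv]
        have := hkey x hx
        nlinarith [hkey x hx]
    have h0 : G t - φ t ≤ G 0 - φ 0 := hmono (Set.left_mem_Icc.mpr hT) ht ht.1
    rw [hφ0, hG0] at h0
    have hGφ : G t ≤ φ t := by linarith
    have hGpos : 0 < G t := hpos t ht
    have hinv : Z t ≤ G t ^ (1 / (1 - p)) := by
      have := Real.rpow_le_rpow_of_nonpos hGpos hGφ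
        (z := 1 / (1 - p)) (div_nonpos_of_nonneg_of_nonpos zero_le_one hneg.le)
      calc Z t = (Z t ^ (1 - p)) ^ (1 / (1 - p)) := by
            rw [one_div, Real.rpow_rpow_inv hZt.le h1p]
        _ ≤ G t ^ (1 / (1 - p)) := this
    calc u t ≤ U t := huU t ht
      _ = Z t * Real.exp (V t) := hexp.symm
      _ ≤ G t ^ (1 / (1 - p)) * Real.exp (V t) :=
          mul_le_mul_of_nonneg_right hinv (Real.exp_pos _).le
      _ = Real.exp (V t) * G t ^ (1 / (1 - p)) := mul_comm _ _
  · -- p < 1 : show φ t ≤ G t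
    have hmono : AntitoneOn (fun x => φ x - G x) (Set.Icc 0 T) := by
      apply antitoneOn_of_deriv_nonpos (convex_Icc 0 T) (hφc.sub hGc)
      · intro x hx
        rw [interior_Icc] at hx
        exact ((hφ' x hx).sub (hG' x hx)).differentiableAt.differentiableWithinAt
      · intro x hx
        rw [interior_Icc] at hx
        rw [((hφ' x hx).sub (hG' x hx)).deriv]
        nlinarith [hkey x hx]
    have h0 : φ t - G t ≤ φ 0 - G 0 := hmono (Set.left_mem_Icc.mpr hT) ht ht.1
    rw [hφ0, hG0] at h0
    have hφG : φ t ≤ G t := by linarith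
    have hinv : Z t ≤ G t ^ (1 / (1 - p)) := by
      calc Z t = (Z t ^ (1 - p)) ^ (1 / (1 - p)) := by
            rw [one_div, Real.rpow_rpow_inv hZt.le h1p]
        _ ≤ G t ^ (1 / (1 - p)) :=
            Real.rpow_le_rpow (Real.rpow_nonneg hZt.le _) hφG
              (by positivity)
    calc u t ≤ U t := huU t ht
      _ = Z t * Real.exp (V t) := hexp.symm
      _ ≤ G t ^ (1 / (1 - p)) * Real.exp (V t) :=
          mul_le_mul_of_nonneg_right hinv (Real.exp_pos _).le
      _ = Real.exp (V t) * G t ^ (1 / (1 - p)) := mul_comm _ _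
end

section
/- For every $C > 0$, $p > 1$ and $T > 0$ there exist $\varepsilon > 0$ and $C' > 0$ such that: if $u_0 \in (0, \varepsilon]$ and $f : [0,T] \to \mathbb{R}$ is a nonnegative continuous function satisfying $f(t) \leq C\big(u_0 + \int_0^t (f(s) + f(s)^p)\,ds\big)$ for all $t \in [0,T]$, then $f(t) \leq C' u_0$ for all $t \in [0,T]$. -/
open Real MeasureTheory intervalIntegral

/-- Integral form of Grönwall's inequality on `[0, b]`. -/
lemma gronwall_integral_aux {f : ℝ → ℝ} {a K b : ℝ} (hK : 0 ≤ K) (ha : 0 ≤ a)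
    (hf : ContinuousOn f (Set.Icc 0 b)) (hnn : ∀ t ∈ Set.Icc (0:ℝ) b, 0 ≤ f t)
    (h : ∀ t ∈ Set.Icc (0:ℝ) b, f t ≤ a + K * ∫ s in (0:ℝ)..t, f s) :
    ∀ t ∈ Set.Icc (0:ℝ) b, f t ≤ a * Real.exp (K * t) := by
  intro t ht
  rcases le_or_gt b 0 with hb | hb
  · have ht0 : t = 0 := le_antisymm (ht.2.trans hb) ht.1
    have := h t ht
    rw [ht0] at this ⊢
    simp only [intervalIntegral.integral_same, mul_zero, add_zero] at this
    simpa [Real.exp_zero] using this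
  set F : ℝ → ℝ := fun x => ∫ s in (0:ℝ)..x, f s with hF
  have hfi : IntegrableOn f (Set.Icc 0 b) := hf.integrableOn_compact isCompact_Icc
  have hFc : ContinuousOn F (Set.Icc 0 b) := by
    have := continuousOn_primitive_interval (a := (0:ℝ)) (b := b) (μ := volume)
      (by rwa [Set.uIcc_of_le hb.le])
    rwa [Set.uIcc_of_le hb.le] at this
  have hmem : ∀ x ∈ Set.Ico (0:ℝ) b, Set.Icc (0:ℝ) b ∈ nhdsWithin x (Set.Ici x) := by
    intro x hx
    refine mem_nhdsWithin.mpr ⟨Set.Iio b, isOpen_Iio, hx.2, ?_⟩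
    rintro y ⟨hy1, hy2⟩
    exact ⟨le_trans hx.1 hy2, le_of_lt hy1⟩
  have hF' : ∀ x ∈ Set.Ico (0:ℝ) b, HasDerivWithinAt F (f x) (Set.Ici x) x := by
    intro x hx
    have hxI : x ∈ Set.Icc (0:ℝ) b := ⟨hx.1, hx.2.le⟩
    have hint : IntervalIntegrable f volume 0 x :=
      (hf.mono (Set.Icc_subset_Icc le_rfl hx.2.le)).intervalIntegrable_of_Icc hx.1
    have hmem' : Set.Icc (0:ℝ) b ∈ nhdsWithin x (Set.Ioi x) := by
      refine mem_nhdsWithin.mpr ⟨Set.Iio b, isOpen_Iio, hx.2, ?_⟩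
      rintro y ⟨hy1, hy2⟩
      exact ⟨hx.1.trans hy2.le, hy1.le⟩
    have hmeas : StronglyMeasurableAtFilter f (nhdsWithin x (Set.Ioi x)) volume :=
      ⟨Set.Icc 0 b, hmem', hf.aestronglyMeasurable measurableSet_Icc⟩
    have hcont : ContinuousWithinAt f (Set.Ioi x) x :=
      (hf x hxI).mono_of_mem_nhdsWithin hmem'
    exact intervalIntegral.integral_hasDerivWithinAt_right hint hmeas hcont
  have hFnn : ∀ x ∈ Set.Icc (0:ℝ) b, 0 ≤ F x := by
    intro x hx
    exact intervalIntegral.integral_nonneg hx.1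
      (fun s hs => hnn s ⟨hs.1, hs.2.trans hx.2⟩)
  have key : ∀ x ∈ Set.Icc (0:ℝ) b, ‖F x‖ ≤ gronwallBound 0 K a (x - 0) := by
    refine norm_le_gronwallBound_of_norm_deriv_right_le hFc hF' (by simp [hF]) ?_
    intro x hx
    have hxI : x ∈ Set.Icc (0:ℝ) b := ⟨hx.1, hx.2.le⟩
    have h1 : ‖f x‖ = f x := Real.norm_of_nonneg (hnn x hxI)
    have h2 : ‖F x‖ = F x := Real.norm_of_nonneg (hFnn x hxI)
    rw [h1, h2]
    calc f x ≤ a + K * F x := h x hxI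
    _ = K * F x + a := by ring
  have hFle : F t ≤ gronwallBound 0 K a t := by
    have := key t ht
    rwa [Real.norm_of_nonneg (hFnn t ht), sub_zero] at this
  have hft : f t ≤ a + K * F t := h t ht
  rcases eq_or_lt_of_le hK with hK0 | hK0
  · have : gronwallBound 0 K a t = 0 + a * t := by
      rw [← hK0]; rw [gronwallBound_K0]
    have hKt : K * t = 0 := by rw [← hK0]; ring
    calc f t ≤ a + K * F t := hft
    _ = a := by rw [← hK0]; ring
    _ ≤ a * Real.exp (K * t) := by
        rw [hKt, Real.exp_zero, mul_one]
  · have hgb : gronwallBound 0 K a t = a / K * (Real.exp (K * t) - 1) := by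
      rw [gronwallBound_of_K_ne_0 (ne_of_gt hK0)]
      simp
    calc f t ≤ a + K * F t := hft
    _ ≤ a + K * (a / K * (Real.exp (K * t) - 1)) := by
        have := mul_le_mul_of_nonneg_left (hgb ▸ hFle) hK
        linarith
    _ = a * Real.exp (K * t) := by field_simp; ring

/-- Small-data corollary of the nonlinear Grönwall inequality. -/
theorem small_data_gronwall (C p T : ℝ) (hC : 0 < C) (hp : 1 < p) (hT : 0 < T) :
    ∃ ε > (0:ℝ), ∃ C' > (0:ℝ),
      ∀ (u₀ : ℝ), u₀ ∈ Set.Ioc (0:ℝ) ε →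
      ∀ (f : ℝ → ℝ), ContinuousOn f (Set.Icc 0 T) →
        (∀ t ∈ Set.Icc (0:ℝ) T, 0 ≤ f t) →
        (∀ t ∈ Set.Icc (0:ℝ) T,
          f t ≤ C * (u₀ + ∫ s in (0:ℝ)..t, (f s + f s ^ p))) →
        ∀ t ∈ Set.Icc (0:ℝ) T, f t ≤ C' * u₀ := by
  set C' : ℝ := 2 * C * Real.exp (2 * C * T) with hC'def
  have hC'pos : 0 < C' := by positivity
  refine ⟨1 / C', by positivity, C', hC'pos, ?_⟩
  intro u₀ hu₀ f hfc hfnn hineq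
  have hu₀pos : 0 < u₀ := hu₀.1
  have hBle1 : C' * u₀ ≤ 1 := by
    calc C' * u₀ ≤ C' * (1 / C') := mul_le_mul_of_nonneg_left hu₀.2 hC'pos.le
    _ = 1 := by field_simp
  set B := C' * u₀ with hB
  have hBpos : 0 < B := by positivity
  by_contra hcon
  push_neg at hcon
  obtain ⟨t₁, ht₁, ht₁gt⟩ := hcon
  -- the set where f ≥ B
  set U : Set ℝ := Set.Icc 0 T ∩ f ⁻¹' (Set.Ici B) with hU
  have hUclosed : IsClosed U :=
    hfc.preimage_isClosed_of_isClosed isClosed_Icc isClosed_Ici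
  have hUne : U.Nonempty := ⟨t₁, ht₁, le_of_lt ht₁gt⟩
  have hUbdd : BddBelow U := ⟨0, fun x hx => hx.1.1⟩
  set t₀ := sInf U with ht₀def
  have ht₀U : t₀ ∈ U := hUclosed.csInf_mem hUne hUbdd
  have ht₀Icc : t₀ ∈ Set.Icc (0:ℝ) T := ht₀U.1
  -- on [0, t₀), f < B ≤ 1
  have hlt : ∀ s ∈ Set.Ico (0:ℝ) t₀, f s < B := by
    intro s hs
    by_contra hge
    push_neg at hge
    have : s ∈ U := ⟨⟨hs.1, hs.2.le.trans ht₀Icc.2⟩, hge⟩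
    exact absurd (csInf_le hUbdd this) (not_le_of_gt hs.2)
  -- pointwise: f s + f s ^ p ≤ 2 * f s on [0, t₀)
  have hpt : ∀ s ∈ Set.Ico (0:ℝ) t₀, f s + f s ^ p ≤ 2 * f s := by
    intro s hs
    have hsIcc : s ∈ Set.Icc (0:ℝ) T := ⟨hs.1, hs.2.le.trans ht₀Icc.2⟩
    have h0 : 0 ≤ f s := hfnn s hsIcc
    have h1 : f s ≤ 1 := (hlt s hs).le.trans hBle1
    have : f s ^ p ≤ f s ^ (1:ℝ) :=
      Real.rpow_le_rpow_of_exponent_ge' h0 h1 zero_le_one hp.le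
    rw [Real.rpow_one] at this
    linarith
  -- continuity of f ^ p
  have hfp : ContinuousOn (fun s => f s + f s ^ p) (Set.Icc 0 T) := by
    refine hfc.add (hfc.rpow_const fun x _ => Or.inr ?_)
    linarith
  -- the linear Grönwall hypothesis on [0, t₀]
  have hlin : ∀ t ∈ Set.Icc (0:ℝ) t₀, f t ≤ C * u₀ + (2 * C) * ∫ s in (0:ℝ)..t, f s := by
    intro t ht
    have htIcc : t ∈ Set.Icc (0:ℝ) T := ⟨ht.1, ht.2.trans ht₀Icc.2⟩
    have hsub : Set.Icc (0:ℝ) t ⊆ Set.Icc 0 T := Set.Icc_subset_Icc le_rfl htIcc.2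
    have hint1 : IntervalIntegrable (fun s => f s + f s ^ p) volume 0 t :=
      ((hfp.mono hsub)).intervalIntegrable_of_Icc ht.1
    have hint2 : IntervalIntegrable (fun s => 2 * f s) volume 0 t :=
      ((hfc.mono hsub).const_smul (2:ℝ)).intervalIntegrable_of_Icc ht.1
    have hae : (fun s => f s + f s ^ p) ≤ᵐ[volume.restrict (Set.Icc 0 t)]
        (fun s => 2 * f s) := by
      have hne : ∀ᵐ x ∂(volume.restrict (Set.Icc 0 t)), x ≠ t := by
        refine ae_restrict_of_ae ?_
        have hset : {x : ℝ | ¬ x ≠ t} = {t} := by ext x; simp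
        rw [ae_iff, hset]
        exact Real.volume_singleton
      filter_upwards [ae_restrict_mem measurableSet_Icc, hne] with x hx hxne
      have hxlt : x < t₀ := (lt_of_le_of_ne hx.2 hxne).trans_le ht.2
      exact hpt x ⟨hx.1, hxlt⟩
    have hmono : (∫ s in (0:ℝ)..t, (f s + f s ^ p)) ≤ ∫ s in (0:ℝ)..t, 2 * f s :=
      intervalIntegral.integral_mono_ae_restrict ht.1 hint1 hint2 hae
    have h2 : (∫ s in (0:ℝ)..t, 2 * f s) = 2 * ∫ s in (0:ℝ)..t, f s := by
      simpa using intervalIntegral.integral_const_mul (2:ℝ) f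
    calc f t ≤ C * (u₀ + ∫ s in (0:ℝ)..t, (f s + f s ^ p)) := hineq t htIcc
    _ ≤ C * (u₀ + 2 * ∫ s in (0:ℝ)..t, f s) := by
        apply mul_le_mul_of_nonneg_left _ hC.le
        rw [h2] at hmono; linarith
    _ = C * u₀ + (2 * C) * ∫ s in (0:ℝ)..t, f s := by ring
  -- apply linear Grönwall
  have hgron := gronwall_integral_aux (f := f) (a := C * u₀) (K := 2 * C) (b := t₀)
    (by positivity) (by positivity)
    (hfc.mono (Set.Icc_subset_Icc le_rfl ht₀Icc.2))
    (fun t ht => hfnn t ⟨ht.1, ht.2.trans ht₀Icc.2⟩) hlin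
  have hft₀ : f t₀ ≤ C * u₀ * Real.exp (2 * C * t₀) :=
    hgron t₀ ⟨ht₀Icc.1, le_rfl⟩
  have hexp : Real.exp (2 * C * t₀) ≤ Real.exp (2 * C * T) :=
    Real.exp_le_exp.mpr (by nlinarith [ht₀Icc.2])
  have : f t₀ < B := by
    calc f t₀ ≤ C * u₀ * Real.exp (2 * C * T) := by
          have := mul_le_mul_of_nonneg_left hexp (by positivity : (0:ℝ) ≤ C * u₀)
          linarith
    _ < 2 * C * Real.exp (2 * C * T) * u₀ := by
        have hepos : 0 < Real.exp (2 * C * T) := Real.exp_pos _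
        nlinarith
    _ = B := by rw [hB, hC'def]
  exact absurd ht₀U.2 (not_le_of_gt this)
end

section
/- Let $\eta = \mathrm{diag}(-1,1,1,1)$ on $\mathbb{R}^4$ and let $V, W \in \mathbb{R}^4$ be future-directed timelike vectors ($\eta(V,V) < 0$, $\eta(W,W) < 0$, $V^0 > 0$, $W^0 > 0$). Then there exists a constant $C > 0$ (depending only on $V$ and $W$) such that for every covector $\xi \in \mathbb{R}^4$, $Q_\xi(V,W) := \langle \xi, V\rangle \langle \xi, W\rangle - \tfrac12\big(-\xi_0^2 + \xi_1^2 + \xi_2^2 + \xi_3^2\big)\,\eta(V,W) \geq C\big(\xi_0^2 + \xi_1^2 + \xi_2^2 + \xi_3^2\big)$. -/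
set_option maxHeartbeats 1000000

private lemma emt_cs3 (a1 a2 a3 b1 b2 b3 : ℝ) :
    (a1 * b1 + a2 * b2 + a3 * b3) ^ 2 ≤
      (a1 ^ 2 + a2 ^ 2 + a3 ^ 2) * (b1 ^ 2 + b2 ^ 2 + b3 ^ 2) := by
  nlinarith [sq_nonneg (a1 * b2 - a2 * b1), sq_nonneg (a1 * b3 - a3 * b1),
    sq_nonneg (a2 * b3 - a3 * b2)]

private lemma emt_le_of_sq (p q : ℝ) (h : p ^ 2 ≤ q ^ 2) (hq : 0 ≤ q) : p ≤ q := by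
  nlinarith [sq_nonneg (p - q), sq_nonneg (p + q)]

private lemma emt_key (x0 s bv r2 : ℝ) (hbv : 0 ≤ bv) (hr2 : 0 ≤ r2)
    (hs : s ^ 2 ≤ r2 * bv ^ 2) :
    0 ≤ x0 * s + (1/2) * bv * (x0 ^ 2 + r2) := by
  rcases eq_or_lt_of_le hbv with hbv0 | hbv0
  · subst hbv0
    norm_num at hs
    have hs0 : s = 0 := by nlinarith [sq_nonneg s, hs]
    simp [hs0]
  · nlinarith [sq_nonneg (bv * x0 + s), hs, mul_pos hbv0 hbv0]

private lemma emt_pointwise (v0 v1 v2 v3 w0 w1 w2 w3 bv bw : ℝ)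
    (hbvsq : bv ^ 2 = v1 ^ 2 + v2 ^ 2 + v3 ^ 2)
    (hbwsq : bw ^ 2 = w1 ^ 2 + w2 ^ 2 + w3 ^ 2)
    (hbv0 : 0 ≤ bv) (hbw0 : 0 ≤ bw)
    (hbvlt : bv < v0) (hbwlt : bw < w0)
    (x0 x1 x2 x3 : ℝ) :
    (1/2) * (v0 - bv) * (w0 - bw) * (x0 ^ 2 + x1 ^ 2 + x2 ^ 2 + x3 ^ 2) ≤
      (x0 * v0 + x1 * v1 + x2 * v2 + x3 * v3) *
        (x0 * w0 + x1 * w1 + x2 * w2 + x3 * w3) -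
      (1 / 2) * (-(x0 ^ 2) + x1 ^ 2 + x2 ^ 2 + x3 ^ 2) *
        (-(v0 * w0) + v1 * w1 + v2 * w2 + v3 * w3) := by
  obtain ⟨A, hA⟩ : ∃ y : ℝ, y = x0 * v0 + x1 * v1 + x2 * v2 + x3 * v3 := ⟨_, rfl⟩
  obtain ⟨e, he⟩ : ∃ y : ℝ, y = -(x0 ^ 2) + x1 ^ 2 + x2 ^ 2 + x3 ^ 2 := ⟨_, rfl⟩
  obtain ⟨J0, hJ0⟩ : ∃ y : ℝ, y = A * x0 + (1/2) * e * v0 := ⟨_, rfl⟩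
  obtain ⟨J1, hJ1⟩ : ∃ y : ℝ, y = -(A * x1) + (1/2) * e * v1 := ⟨_, rfl⟩
  obtain ⟨J2, hJ2⟩ : ∃ y : ℝ, y = -(A * x2) + (1/2) * e * v2 := ⟨_, rfl⟩
  obtain ⟨J3, hJ3⟩ : ∃ y : ℝ, y = -(A * x3) + (1/2) * e * v3 := ⟨_, rfl⟩
  have hCSv : (x1 * v1 + x2 * v2 + x3 * v3) ^ 2 ≤
      (x1 ^ 2 + x2 ^ 2 + x3 ^ 2) * bv ^ 2 := by
    rw [hbvsq]; exact emt_cs3 x1 x2 x3 v1 v2 v3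
  have key : 0 ≤ x0 * (x1 * v1 + x2 * v2 + x3 * v3)
      + (1/2) * bv * (x0 ^ 2 + (x1 ^ 2 + x2 ^ 2 + x3 ^ 2)) :=
    emt_key x0 _ bv _ hbv0 (by positivity) hCSv
  have hJ0ge : (1/2) * (v0 - bv) * (x0 ^ 2 + x1 ^ 2 + x2 ^ 2 + x3 ^ 2) ≤ J0 := by
    rw [hJ0, hA, he]; linarith only [key]
  have hJ0nn : 0 ≤ J0 := by
    have h : (0:ℝ) ≤ (1/2) * (v0 - bv) * (x0 ^ 2 + x1 ^ 2 + x2 ^ 2 + x3 ^ 2) :=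
      mul_nonneg (by linarith only [hbvlt]) (by positivity)
    linarith only [h, hJ0ge]
  have hcausal : J1 ^ 2 + J2 ^ 2 + J3 ^ 2 ≤ J0 ^ 2 := by
    have hbv2 : bv ^ 2 < v0 ^ 2 := by
      have := mul_self_lt_mul_self hbv0 hbvlt
      nlinarith only [this]
    have hVt : -(v0 * v0) + v1 * v1 + v2 * v2 + v3 * v3 < 0 := by
      nlinarith only [hbv2, hbvsq]
    have hid : J1 ^ 2 + J2 ^ 2 + J3 ^ 2 - J0 ^ 2 =
        (1/4) * e ^ 2 * (-(v0 * v0) + v1 * v1 + v2 * v2 + v3 * v3) := by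
      rw [hJ0, hJ1, hJ2, hJ3, hA, he]; ring
    have h1 : (0:ℝ) ≤ (1/4) * e ^ 2 := by positivity
    have h2 : 0 ≤ (1/4) * e ^ 2 * (-(-(v0 * v0) + v1 * v1 + v2 * v2 + v3 * v3)) :=
      mul_nonneg h1 (by linarith only [hVt])
    nlinarith only [hid, h2]
  have hJW : J1 * w1 + J2 * w2 + J3 * w3 ≤ J0 * bw := by
    have h1 : (J1 * w1 + J2 * w2 + J3 * w3) ^ 2 ≤
        (J1 ^ 2 + J2 ^ 2 + J3 ^ 2) * bw ^ 2 := by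
      rw [hbwsq]; exact emt_cs3 J1 J2 J3 w1 w2 w3
    have h2 : (J1 ^ 2 + J2 ^ 2 + J3 ^ 2) * bw ^ 2 ≤ J0 ^ 2 * bw ^ 2 :=
      mul_le_mul_of_nonneg_right hcausal (sq_nonneg bw)
    refine emt_le_of_sq _ _ ?_ (mul_nonneg hJ0nn hbw0)
    calc (J1 * w1 + J2 * w2 + J3 * w3) ^ 2 ≤ J0 ^ 2 * bw ^ 2 := le_trans h1 h2
      _ = (J0 * bw) ^ 2 := by ring
  have hTid : (x0 * v0 + x1 * v1 + x2 * v2 + x3 * v3) *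
        (x0 * w0 + x1 * w1 + x2 * w2 + x3 * w3) -
      (1 / 2) * (-(x0 ^ 2) + x1 ^ 2 + x2 ^ 2 + x3 ^ 2) *
        (-(v0 * w0) + v1 * w1 + v2 * w2 + v3 * w3)
      = J0 * w0 - (J1 * w1 + J2 * w2 + J3 * w3) := by
    rw [hJ0, hJ1, hJ2, hJ3, hA, he]; ring
  rw [hTid]
  have hstep : (1/2) * (v0 - bv) * (x0 ^ 2 + x1 ^ 2 + x2 ^ 2 + x3 ^ 2) * (w0 - bw)
      ≤ J0 * (w0 - bw) :=
    mul_le_mul_of_nonneg_right hJ0ge (by linarith only [hbwlt])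
  nlinarith only [hstep, hJW]

/-- Positive definiteness of the energy-momentum tensor contracted with two
future-directed timelike vectors (Aretakis' lemma, pointwise version). -/
theorem energy_momentum_pos_def (V W : Fin 4 → ℝ)
    (hV_timelike : -(V 0 * V 0) + V 1 * V 1 + V 2 * V 2 + V 3 * V 3 < 0)
    (hW_timelike : -(W 0 * W 0) + W 1 * W 1 + W 2 * W 2 + W 3 * W 3 < 0)
    (hV_future : 0 < V 0) (hW_future : 0 < W 0) :
    ∃ C > (0:ℝ), ∀ ξ : Fin 4 → ℝ,
      C * (ξ 0 ^ 2 + ξ 1 ^ 2 + ξ 2 ^ 2 + ξ 3 ^ 2) ≤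
        (ξ 0 * V 0 + ξ 1 * V 1 + ξ 2 * V 2 + ξ 3 * V 3) *
          (ξ 0 * W 0 + ξ 1 * W 1 + ξ 2 * W 2 + ξ 3 * W 3) -
        (1 / 2) * (-(ξ 0 ^ 2) + ξ 1 ^ 2 + ξ 2 ^ 2 + ξ 3 ^ 2) *
          (-(V 0 * W 0) + V 1 * W 1 + V 2 * W 2 + V 3 * W 3) := by
  obtain ⟨bV, hbVdef⟩ : ∃ y : ℝ, y = Real.sqrt (V 1 ^ 2 + V 2 ^ 2 + V 3 ^ 2) := ⟨_, rfl⟩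
  obtain ⟨bW, hbWdef⟩ : ∃ y : ℝ, y = Real.sqrt (W 1 ^ 2 + W 2 ^ 2 + W 3 ^ 2) := ⟨_, rfl⟩
  have hbVsq : bV ^ 2 = V 1 ^ 2 + V 2 ^ 2 + V 3 ^ 2 := by
    rw [hbVdef]; exact Real.sq_sqrt (by positivity)
  have hbWsq : bW ^ 2 = W 1 ^ 2 + W 2 ^ 2 + W 3 ^ 2 := by
    rw [hbWdef]; exact Real.sq_sqrt (by positivity)
  have hbV0 : 0 ≤ bV := hbVdef ▸ Real.sqrt_nonneg _
  have hbW0 : 0 ≤ bW := hbWdef ▸ Real.sqrt_nonneg _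
  have hbVlt : bV < V 0 := by
    rw [hbVdef]
    rw [show (V 0 : ℝ) = Real.sqrt (V 0 ^ 2) from (Real.sqrt_sq hV_future.le).symm]
    apply Real.sqrt_lt_sqrt (by positivity)
    nlinarith only [hV_timelike]
  have hbWlt : bW < W 0 := by
    rw [hbWdef]
    rw [show (W 0 : ℝ) = Real.sqrt (W 0 ^ 2) from (Real.sqrt_sq hW_future.le).symm]
    apply Real.sqrt_lt_sqrt (by positivity)
    nlinarith only [hW_timelike]
  refine ⟨(1/2) * (V 0 - bV) * (W 0 - bW),
    mul_pos (mul_pos (by norm_num) (by linarith only [hbVlt])) (by linarith only [hbWlt]),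
    fun ξ => ?_⟩
  exact emt_pointwise (V 0) (V 1) (V 2) (V 3) (W 0) (W 1) (W 2) (W 3) bV bW
    hbVsq hbWsq hbV0 hbW0 hbVlt hbWlt (ξ 0) (ξ 1) (ξ 2) (ξ 3)
end
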